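/- Let G be a group with no elements of order 2 (i.e., g^2 = e implies g = e), and let A be a finite subset of G with |A| = 4. Then |AA^{-1}| = |A^{-1}A|. -/

import Mathlib

open scoped Pointwise
set_option maxHeartbeats 4000000 in
private theorem stmt8_boolCore : ∀ s1 s2 s3 s4 s5 s6 c1 c2 c3 c4 c5 c6 b12 b13 b23 : Bool,
    (!(s1 && c1) && !(s1 && c2) && !(s2 && c3) && !(s2 && c4) && !(s3 && c5) && !(s3 && c6) && !(s4 && c3) && !(s4 && c4) && !(s5 && c5) && !(s5 && c6) && !(s6 && c1) && !(s6 && c2) && !(c1 && c3) && !(c1 && c5) && !(c1 && b13) && !(c2 && c4) && !(c2 && c6) && !(c2 && b13) && !(c3 && c6) && !(c3 && b12) && !(c4 && c5) && !(c4 && b12) && !(c5 && b23) && !(c6 && b23) && !(s1 && c3 && !c4) && !(s1 && c4 && !c3) && !(s2 && c1 && !c2) && !(s2 && c2 && !c1) && !(s3 && c3 && !c4) && !(s3 && c4 && !c3) && !(s4 && c5 && !c6) && !(s4 && c6 && !c5) && !(s5 && c1 && !c2) && !(s5 && c2 && !c1) && !(s6 && c5 && !c6) && !(s6 && c6 &&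 !c5) && !(c1 && b23 && !c2) && !(c2 && b23 && !c1) && !(c5 && b12 && !c6) && !(c6 && b12 && !c5) && !(c5 && b13 && !c6) && !(c6 && b13 && !c5)) = true →
    (cond (s1 || s2 || c2 || c4) 0 2) + (cond ((s3 || s4 || c3 || c6) || b12) 0 2) + (cond ((s5 || s6 || c1 || c5) || b13 || b23) 0 2) = (cond (s1 || s2 || c1 || c3) 0 2) + (cond ((s3 || s4 || c4 || c5) || b12) 0 2) + (cond ((s5 || s6 || c2 || c6) || b13 || b23) (0:Nat) 2) := by decide

private theorem stmt8_core (S1 S2 S3 S4 S5 S6 C1 C2 C3 C4 C5 C6 B12 B13 B23 : Prop)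
    [Decidable S1] [Decidable S2] [Decidable S3] [Decidable S4] [Decidable S5] [Decidable S6] [Decidable C1] [Decidable C2] [Decidable C3] [Decidable C4] [Decidable C5] [Decidable C6] [Decidable B12] [Decidable B13] [Decidable B23]
    (hax1 : ¬(S1 ∧ C1)) (hax2 : ¬(S1 ∧ C2)) (hax3 : ¬(S2 ∧ C3)) (hax4 : ¬(S2 ∧ C4)) (hax5 : ¬(S3 ∧ C5)) (hax6 : ¬(S3 ∧ C6)) (hax7 : ¬(S4 ∧ C3)) (hax8 : ¬(S4 ∧ C4)) (hax9 : ¬(S5 ∧ C5)) (hax10 : ¬(S5 ∧ C6)) (hax11 : ¬(S6 ∧ C1)) (hax12 : ¬(S6 ∧ C2))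
    (hax13 : ¬(C1 ∧ C3)) (hax14 : ¬(C1 ∧ C5)) (hax15 : ¬(C1 ∧ B13)) (hax16 : ¬(C2 ∧ C4)) (hax17 : ¬(C2 ∧ C6)) (hax18 : ¬(C2 ∧ B13)) (hax19 : ¬(C3 ∧ C6)) (hax20 : ¬(C3 ∧ B12)) (hax21 : ¬(C4 ∧ C5)) (hax22 : ¬(C4 ∧ B12)) (hax23 : ¬(C5 ∧ B23)) (hax24 : ¬(C6 ∧ B23))
    (hax25 : S1 → C3 → C4) (hax26 : S1 → C4 → C3) (hax27 : S2 → C1 → C2) (hax28 : S2 → C2 → C1) (hax29 : S3 → C3 → C4) (hax30 : S3 → C4 → C3) (hax31 : S4 → C5 → C6) (hax32 : S4 → C6 → C5) (hax33 : S5 → C1 → C2)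
    (hax34 : S5 → C2 → C1) (hax35 : S6 → C5 → C6) (hax36 : S6 → C6 → C5) (hax37 : C1 → B23 → C2) (hax38 : C2 → B23 → C1) (hax39 : C5 → B12 → C6) (hax40 : C6 → B12 → C5) (hax41 : C5 → B13 → C6) (hax42 : C6 → B13 → C5) :
    (if (S1 ∨ S2 ∨ C2 ∨ C4) then 0 else 2) + (if ((S3 ∨ S4 ∨ C3 ∨ C6) ∨ B12) then 0 else 2) + (if ((S5 ∨ S6 ∨ C1 ∨ C5) ∨ B13 ∨ B23) then 0 else 2)
      = (if (S1 ∨ S2 ∨ C1 ∨ C3) then 0 else 2) + (if ((S3 ∨ S4 ∨ C4 ∨ C5) ∨ B12) then 0 else 2) + (if ((S5 ∨ S6 ∨ C2 ∨ C6) ∨ B13 ∨ B23) then (0:Nat) else 2) := by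
  have h := stmt8_boolCore (decide S1) (decide S2) (decide S3) (decide S4) (decide S5) (decide S6) (decide C1) (decide C2) (decide C3) (decide C4) (decide C5) (decide C6) (decide B12) (decide B13) (decide B23) ?_
  · simpa only [← Bool.decide_or, Bool.cond_decide, or_assoc] using h
  · simp only [Bool.and_eq_true, ← decide_not, ← Bool.decide_and, decide_eq_true_eq]
    exact ⟨⟨⟨⟨⟨⟨⟨⟨⟨⟨⟨⟨⟨⟨⟨⟨⟨⟨⟨⟨⟨⟨⟨⟨⟨⟨⟨⟨⟨⟨⟨⟨⟨⟨⟨⟨⟨⟨⟨⟨⟨(fun hh => hax1 hh), (fun hh => hax2 hh)⟩, (fun hh => hax3 hh)⟩, (fun hh => hax4 hh)⟩, (fun hh => hax5 hh)⟩, (fun hh => hax6 hh)⟩, (fun hh => hax7 hh)⟩, (fun hh => hax8 hh)⟩, (fun hh => hax9 hh)⟩, (fun hh => hax10 hh)⟩, (fun hh => hax11 hh)⟩, (fun hh => hax12 hh)⟩, (fun hh => hax13 hh)⟩, (fun hh => hax14 hh)⟩, (fun hh => hax15 hh)⟩, (fun hh => hax16 hh)⟩, (fun hh => hax17 hh)⟩,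 (fun hh => hax18 hh)⟩, (fun hh => hax19 hh)⟩, (fun hh => hax20 hh)⟩, (fun hh => hax21 hh)⟩, (fun hh => hax22 hh)⟩, (fun hh => hax23 hh)⟩, (fun hh => hax24 hh)⟩, (fun hh => hh.2 (hax25 hh.1.1 hh.1.2))⟩, (fun hh => hh.2 (hax26 hh.1.1 hh.1.2))⟩, (fun hh => hh.2 (hax27 hh.1.1 hh.1.2))⟩, (fun hh => hh.2 (hax28 hh.1.1 hh.1.2))⟩, (fun hh => hh.2 (hax29 hh.1.1 hh.1.2))⟩, (fun hh => hh.2 (hax30 hh.1.1 hh.1.2))⟩, (fun hh => hh.2 (hax31 hh.1.1 hh.1.2))⟩, (fun hh => hh.2 (hax32 hh.1.1 hh.1.2))⟩, (fun hh => hh.2 (hax33 hh.1.1 hh.1.2))⟩, (fun hh => hh.2 (hax34 hh.1.1 hh.1.2))⟩, (fun hh => hh.2 (hax35 hh.1.1 hh.1.2))⟩, (fun hh => hh.2 (hax36 hh.1.1 hh.1.2))⟩, (fun hh => hh.2 (hax37 hh.1.1 hh.1.2))⟩, (fun hh => hh.2 (hax38 hh.1.1 hh.1.2))⟩, (fun hh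 => hh.2 (hax39 hh.1.1 hh.1.2))⟩, (fun hh => hh.2 (hax40 hh.1.1 hh.1.2))⟩, (fun hh => hh.2 (hax41 hh.1.1 hh.1.2))⟩, (fun hh => hh.2 (hax42 hh.1.1 hh.1.2))⟩
private lemma stmt8_count {G : Type*} [Group G] [DecidableEq G]
    (hsq : ∀ g : G, g * g = 1 → g = 1) (C : Finset G) (hC : ∀ g ∈ C, g⁻¹ ∈ C)
    (u1 u2 u3 : G) (h1 : u1 ≠ 1) (h2 : u2 ≠ 1) (h3 : u3 ≠ 1) :
    (C ∪ ({u1, u1⁻¹} ∪ {u2, u2⁻¹} ∪ {u3, u3⁻¹})).card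
      = C.card + ((if u1 ∈ C then 0 else 2) + (if u2 ∈ C ∨ u1 = u2 ∨ u1 = u2⁻¹ then 0 else 2)
        + (if u3 ∈ C ∨ u1 = u3 ∨ u1 = u3⁻¹ ∨ u2 = u3 ∨ u2 = u3⁻¹ then 0 else 2)) := by
  have ninv : ∀ g : G, g ≠ 1 → ¬(g = g⁻¹) := by
    intro g hg h
    exact hg (hsq g (by nth_rewrite 2 [h]; exact mul_inv_cancel g))
  have pcard : ∀ g : G, g ≠ 1 → ({g, g⁻¹} : Finset G).card = 2 := by
    intro g hg
    rw [Finset.card_insert_of_notMem (by simpa using ninv g hg), Finset.card_singleton]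
  have psub : ∀ g : G, g ∈ C → ({g, g⁻¹} : Finset G) ⊆ C := by
    intro g hg t ht
    rcases Finset.mem_insert.mp ht with rfl | ht
    · exact hg
    · rw [Finset.mem_singleton.mp ht]; exact hC g hg
  have pdisjC : ∀ g : G, g ∉ C → Disjoint ({g, g⁻¹} : Finset G) C := by
    intro g hg
    rw [Finset.disjoint_left]
    intro t ht htC
    rcases Finset.mem_insert.mp ht with rfl | ht
    · exact hg htC
    · rw [Finset.mem_singleton.mp ht] at htC
      exact hg (by simpa using hC _ htC)
  have pdisj : ∀ g h : G, ¬(g = h) → ¬(g = h⁻¹) → Disjoint ({g, g⁻¹} : Finset G) ({h, h⁻¹} : Finset G) := by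
    intro g h hgh hgh'
    rw [Finset.disjoint_left]
    intro t ht ht'
    rcases Finset.mem_insert.mp ht with rfl | ht
    · rcases Finset.mem_insert.mp ht' with rfl | ht'
      · exact hgh rfl
      · exact hgh' (Finset.mem_singleton.mp ht')
    · have ht0 := Finset.mem_singleton.mp ht
      subst ht0
      rcases Finset.mem_insert.mp ht' with h' | ht'
      · exact hgh' (by rw [← h', inv_inv])
      · exact hgh (inv_injective (Finset.mem_singleton.mp ht'))
  have peq : ∀ g h : G, (g = h ∨ g = h⁻¹) → ({g, g⁻¹} : Finset G) = ({h, h⁻¹} : Finset G) := by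
    rintro g h (rfl | rfl)
    · rfl
    · rw [inv_inv, Finset.pair_comm]
  set P1 : Finset G := {u1, u1⁻¹} with hP1
  set P2 : Finset G := {u2, u2⁻¹} with hP2
  set P3 : Finset G := {u3, u3⁻¹} with hP3
  have hsplit : ∀ s t : Finset G, (s ∪ t).card = (t \ s).card + s.card := by
    intro s t; rw [Finset.union_comm, Finset.card_sdiff_add_card]
  have e1 : (P1 \ C).card = if u1 ∈ C then 0 else 2 := by
    by_cases h : u1 ∈ C
    · rw [if_pos h, Finset.sdiff_eq_empty_iff_subset.mpr (psub _ h), Finset.card_empty]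
    · rw [if_neg h, Finset.sdiff_eq_self_iff_disjoint.mpr (pdisjC _ h), pcard _ h1]
  have e2 : ((P2 \ C) \ (P1 \ C)).card = if u2 ∈ C ∨ u1 = u2 ∨ u1 = u2⁻¹ then 0 else 2 := by
    by_cases h : u2 ∈ C
    · rw [if_pos (Or.inl h), Finset.sdiff_eq_empty_iff_subset.mpr (psub _ h)]
      simp
    · by_cases hq : u1 = u2 ∨ u1 = u2⁻¹
      · rw [if_pos (Or.inr hq), hP1, hP2, peq _ _ hq, Finset.sdiff_self, Finset.card_empty]
      · push_neg at hq
        rw [if_neg (by tauto)]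
        have hd : Disjoint P2 P1 := (pdisj u1 u2 hq.1 hq.2).symm
        rw [Finset.sdiff_eq_self_iff_disjoint.mpr
            ((hd.mono Finset.sdiff_subset Finset.sdiff_subset)),
          Finset.sdiff_eq_self_iff_disjoint.mpr (pdisjC _ h), pcard _ h2]
  have e3 : ((P3 \ C) \ ((P1 \ C) ∪ (P2 \ C))).card
      = if u3 ∈ C ∨ u1 = u3 ∨ u1 = u3⁻¹ ∨ u2 = u3 ∨ u2 = u3⁻¹ then 0 else 2 := by
    by_cases h : u3 ∈ C
    · rw [if_pos (Or.inl h), Finset.sdiff_eq_empty_iff_subset.mpr (psub _ h)]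
      simp
    · by_cases hq1 : u1 = u3 ∨ u1 = u3⁻¹
      · rw [if_pos (by tauto), Finset.card_eq_zero.mpr]
        rw [Finset.sdiff_eq_empty_iff_subset]
        refine subset_trans ?_ Finset.subset_union_left
        rw [hP1, hP3, peq _ _ hq1]
      · by_cases hq2 : u2 = u3 ∨ u2 = u3⁻¹
        · rw [if_pos (by tauto), Finset.card_eq_zero.mpr]
          rw [Finset.sdiff_eq_empty_iff_subset]
          refine subset_trans ?_ Finset.subset_union_right
          rw [hP2, hP3, peq _ _ hq2]
        · push_neg at hq1 hq2
          rw [if_neg (by tauto)]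
          have hd1 : Disjoint P3 P1 := (pdisj u1 u3 hq1.1 hq1.2).symm
          have hd2 : Disjoint P3 P2 := (pdisj u2 u3 hq2.1 hq2.2).symm
          have hd : Disjoint (P3 \ C) ((P1 \ C) ∪ (P2 \ C)) := by
            rw [Finset.disjoint_union_right]
            exact ⟨(hd1.mono Finset.sdiff_subset Finset.sdiff_subset),
              (hd2.mono Finset.sdiff_subset Finset.sdiff_subset)⟩
          rw [Finset.sdiff_eq_self_iff_disjoint.mpr hd,
            Finset.sdiff_eq_self_iff_disjoint.mpr (pdisjC _ h), pcard _ h3]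
  calc (C ∪ (P1 ∪ P2 ∪ P3)).card
      = ((P1 ∪ P2 ∪ P3) \ C).card + C.card := hsplit _ _
    _ = (((P1 \ C) ∪ (P2 \ C)) ∪ (P3 \ C)).card + C.card := by
        rw [Finset.union_sdiff_distrib, Finset.union_sdiff_distrib]
    _ = (((P3 \ C) \ ((P1 \ C) ∪ (P2 \ C))).card + (((P2 \ C) \ (P1 \ C)).card + (P1 \ C).card)) + C.card := by
        rw [hsplit ((P1 \ C) ∪ (P2 \ C)) (P3 \ C), hsplit (P1 \ C) (P2 \ C)]
    _ = C.card + ((if u1 ∈ C then 0 else 2) + (if u2 ∈ C ∨ u1 = u2 ∨ u1 = u2⁻¹ then 0 else 2)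
        + (if u3 ∈ C ∨ u1 = u3 ∨ u1 = u3⁻¹ ∨ u2 = u3 ∨ u2 = u3⁻¹ then 0 else 2)) := by
        rw [e1, e2, e3]; ring
set_option maxHeartbeats 4000000 in
/-- If `G` is a group with no elements of order 2 and `A` is a finite subset of `G` with
`|A| = 4`, then `|A * A⁻¹| = |A⁻¹ * A|`. -/
theorem stmt_8 {G : Type*} [Group G] [DecidableEq G]
    (hG : ∀ g : G, g ^ 2 = 1 → g = 1) (A : Finset G) (hA : A.card = 4) :
    (A * A⁻¹).card = (A⁻¹ * A).card := by
  have hsq : ∀ g : G, g * g = 1 → g = 1 := fun g h => hG g (by rwa [pow_two])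
  obtain ⟨a, t, hat, rfl, ht⟩ := Finset.card_eq_succ.mp hA
  obtain ⟨b, c, d, hbc, hbd, hcd, rfl⟩ := Finset.card_eq_three.mp ht
  simp only [Finset.mem_insert, Finset.mem_singleton, not_or] at hat
  obtain ⟨hab, hac, had⟩ := hat
  obtain ⟨x, rfl⟩ : ∃ x, b = a * x := ⟨a⁻¹ * b, (mul_inv_cancel_left a b).symm⟩
  obtain ⟨y, rfl⟩ : ∃ y, c = a * y := ⟨a⁻¹ * c, (mul_inv_cancel_left a c).symm⟩
  obtain ⟨z, rfl⟩ : ∃ z, d = a * z := ⟨a⁻¹ * d, (mul_inv_cancel_left a d).symm⟩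
  have hx1 : x ≠ 1 := fun h => hab (by rw [h, mul_one])
  have hy1 : y ≠ 1 := fun h => hac (by rw [h, mul_one])
  have hz1 : z ≠ 1 := fun h => had (by rw [h, mul_one])
  have hxy : x ≠ y := fun h => hbc (by rw [h])
  have hxz : x ≠ z := fun h => hbd (by rw [h])
  have hyz : y ≠ z := fun h => hcd (by rw [h])
  clear hA ht hab hac had hbc hbd hcd hG
  set Cs : Finset G := {1, x, x⁻¹, y, y⁻¹, z, z⁻¹} with hCs
  have hCinv : ∀ g ∈ Cs, g⁻¹ ∈ Cs := by
    intro g hg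
    rw [hCs] at hg ⊢
    simp only [Finset.mem_insert, Finset.mem_singleton] at hg ⊢
    rcases hg with rfl | rfl | rfl | rfl | rfl | rfl | rfl <;> simp
  -- the left quotient set
  have hU : ({a, a * x, a * y, a * z} : Finset G)⁻¹ * {a, a * x, a * y, a * z}
      = Cs ∪ ({x⁻¹ * y, (x⁻¹ * y)⁻¹} ∪ {x⁻¹ * z, (x⁻¹ * z)⁻¹} ∪ {y⁻¹ * z, (y⁻¹ * z)⁻¹}) := by
    ext g
    simp only [Finset.mem_mul, Finset.mem_inv, Finset.mem_insert, Finset.mem_singleton,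
      Finset.mem_union, hCs]
    constructor
    · rintro ⟨p, ⟨q, hq, rfl⟩, r, hr, rfl⟩
      rcases hq with rfl | rfl | rfl | rfl <;> rcases hr with rfl | rfl | rfl | rfl <;>
        simp [mul_inv_rev, mul_assoc]
    · rintro ((h | h | h | h | h | h | h) | ((h | h) | (h | h)) | (h | h))
      · exact ⟨a⁻¹, ⟨a, Or.inl rfl, rfl⟩, a, Or.inl rfl, by rw [h]; group⟩
      · exact ⟨a⁻¹, ⟨a, Or.inl rfl, rfl⟩, a * x, Or.inr (Or.inl rfl), by rw [h]; group⟩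
      · exact ⟨(a * x)⁻¹, ⟨a * x, Or.inr (Or.inl rfl), rfl⟩, a, Or.inl rfl, by rw [h]; group⟩
      · exact ⟨a⁻¹, ⟨a, Or.inl rfl, rfl⟩, a * y, Or.inr (Or.inr (Or.inl rfl)), by rw [h]; group⟩
      · exact ⟨(a * y)⁻¹, ⟨a * y, Or.inr (Or.inr (Or.inl rfl)), rfl⟩, a, Or.inl rfl, by rw [h]; group⟩
      · exact ⟨a⁻¹, ⟨a, Or.inl rfl, rfl⟩, a * z, Or.inr (Or.inr (Or.inr rfl)), by rw [h]; group⟩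
      · exact ⟨(a * z)⁻¹, ⟨a * z, Or.inr (Or.inr (Or.inr rfl)), rfl⟩, a, Or.inl rfl, by rw [h]; group⟩
      · exact ⟨(a * x)⁻¹, ⟨a * x, Or.inr (Or.inl rfl), rfl⟩, a * y, Or.inr (Or.inr (Or.inl rfl)),
          by rw [h]; group⟩
      · exact ⟨(a * y)⁻¹, ⟨a * y, Or.inr (Or.inr (Or.inl rfl)), rfl⟩, a * x, Or.inr (Or.inl rfl),
          by rw [h]; group⟩
      · exact ⟨(a * x)⁻¹, ⟨a * x, Or.inr (Or.inl rfl), rfl⟩, a * z, Or.inr (Or.inr (Or.inr rfl)),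
          by rw [h]; group⟩
      · exact ⟨(a * z)⁻¹, ⟨a * z, Or.inr (Or.inr (Or.inr rfl)), rfl⟩, a * x, Or.inr (Or.inl rfl),
          by rw [h]; group⟩
      · exact ⟨(a * y)⁻¹, ⟨a * y, Or.inr (Or.inr (Or.inl rfl)), rfl⟩, a * z,
          Or.inr (Or.inr (Or.inr rfl)), by rw [h]; group⟩
      · exact ⟨(a * z)⁻¹, ⟨a * z, Or.inr (Or.inr (Or.inr rfl)), rfl⟩, a * y,
          Or.inr (Or.inr (Or.inl rfl)), by rw [h]; group⟩
  -- the right quotient set, as a conjugate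
  have hW : ({a, a * x, a * y, a * z} : Finset G) * ({a, a * x, a * y, a * z} : Finset G)⁻¹
      = Finset.image (fun g => a * g * a⁻¹)
        (Cs ∪ ({y * x⁻¹, (y * x⁻¹)⁻¹} ∪ {z * x⁻¹, (z * x⁻¹)⁻¹} ∪ {z * y⁻¹, (z * y⁻¹)⁻¹})) := by
    ext g
    simp only [Finset.mem_mul, Finset.mem_inv, Finset.mem_insert, Finset.mem_singleton,
      Finset.mem_union, Finset.mem_image, hCs]
    constructor
    · rintro ⟨p, hp, q, ⟨r, hr, rfl⟩, rfl⟩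
      rcases hp with rfl | rfl | rfl | rfl <;> rcases hr with rfl | rfl | rfl | rfl
      · exact ⟨1, by simp, by group⟩
      · exact ⟨x⁻¹, by simp, by group⟩
      · exact ⟨y⁻¹, by simp, by group⟩
      · exact ⟨z⁻¹, by simp, by group⟩
      · exact ⟨x, by simp, by group⟩
      · exact ⟨1, by simp, by group⟩
      · exact ⟨x * y⁻¹, by simp [mul_inv_rev], by group⟩
      · exact ⟨x * z⁻¹, by simp [mul_inv_rev], by group⟩
      · exact ⟨y, by simp, by group⟩
      · exact ⟨y * x⁻¹, by simp, by group⟩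
      · exact ⟨1, by simp, by group⟩
      · exact ⟨y * z⁻¹, by simp [mul_inv_rev], by group⟩
      · exact ⟨z, by simp, by group⟩
      · exact ⟨z * x⁻¹, by simp, by group⟩
      · exact ⟨z * y⁻¹, by simp, by group⟩
      · exact ⟨1, by simp, by group⟩
    · rintro ⟨h2, hh, rfl⟩
      rcases hh with (h | h | h | h | h | h | h) |
        ((h | h) | (h | h)) | (h | h)
      · exact ⟨a, Or.inl rfl, a⁻¹, ⟨a, Or.inl rfl, rfl⟩, by rw [h]; group⟩
      · exact ⟨a * x, Or.inr (Or.inl rfl), a⁻¹, ⟨a, Or.inl rfl, rfl⟩, by rw [h]⟩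
      · exact ⟨a, Or.inl rfl, (a * x)⁻¹, ⟨a * x, Or.inr (Or.inl rfl), rfl⟩, by rw [h]; group⟩
      · exact ⟨a * y, Or.inr (Or.inr (Or.inl rfl)), a⁻¹, ⟨a, Or.inl rfl, rfl⟩, by rw [h]⟩
      · exact ⟨a, Or.inl rfl, (a * y)⁻¹, ⟨a * y, Or.inr (Or.inr (Or.inl rfl)), rfl⟩, by rw [h]; group⟩
      · exact ⟨a * z, Or.inr (Or.inr (Or.inr rfl)), a⁻¹, ⟨a, Or.inl rfl, rfl⟩, by rw [h]⟩
      · exact ⟨a, Or.inl rfl, (a * z)⁻¹, ⟨a * z, Or.inr (Or.inr (Or.inr rfl)), rfl⟩, by rw [h]; group⟩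
      · exact ⟨a * y, Or.inr (Or.inr (Or.inl rfl)), (a * x)⁻¹, ⟨a * x, Or.inr (Or.inl rfl), rfl⟩,
          by rw [h]; group⟩
      · exact ⟨a * x, Or.inr (Or.inl rfl), (a * y)⁻¹, ⟨a * y, Or.inr (Or.inr (Or.inl rfl)), rfl⟩,
          by rw [h]; group⟩
      · exact ⟨a * z, Or.inr (Or.inr (Or.inr rfl)), (a * x)⁻¹, ⟨a * x, Or.inr (Or.inl rfl), rfl⟩,
          by rw [h]; group⟩
      · exact ⟨a * x, Or.inr (Or.inl rfl), (a * z)⁻¹, ⟨a * z, Or.inr (Or.inr (Or.inr rfl)), rfl⟩,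
          by rw [h]; group⟩
      · exact ⟨a * z, Or.inr (Or.inr (Or.inr rfl)), (a * y)⁻¹, ⟨a * y, Or.inr (Or.inr (Or.inl rfl)),
          rfl⟩, by rw [h]; group⟩
      · exact ⟨a * y, Or.inr (Or.inr (Or.inl rfl)), (a * z)⁻¹, ⟨a * z, Or.inr (Or.inr (Or.inr rfl)),
          rfl⟩, by rw [h]; group⟩
  have hconj : Function.Injective (fun g : G => a * g * a⁻¹) := by
    intro g1 g2 h
    simpa using mul_left_cancel (mul_right_cancel h)
  rw [hU, hW, Finset.card_image_of_injective _ hconj]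
  have hw1ne : y * x⁻¹ ≠ 1 := fun h => hxy (mul_inv_eq_one.mp h).symm
  have hw2ne : z * x⁻¹ ≠ 1 := fun h => hxz (mul_inv_eq_one.mp h).symm
  have hw3ne : z * y⁻¹ ≠ 1 := fun h => hyz (mul_inv_eq_one.mp h).symm
  have hu1ne : x⁻¹ * y ≠ 1 := fun h => hxy (inv_mul_eq_one.mp h)
  have hu2ne : x⁻¹ * z ≠ 1 := fun h => hxz (inv_mul_eq_one.mp h)
  have hu3ne : y⁻¹ * z ≠ 1 := fun h => hyz (inv_mul_eq_one.mp h)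
  rw [stmt8_count hsq Cs hCinv (y * x⁻¹) (z * x⁻¹) (z * y⁻¹) hw1ne hw2ne hw3ne,
    stmt8_count hsq Cs hCinv (x⁻¹ * y) (x⁻¹ * z) (y⁻¹ * z) hu1ne hu2ne hu3ne]
  -- membership characterizations
  have m_u1 : (x⁻¹ * y ∈ Cs) ↔ (y = x * x ∨ x = y * y ∨ y = x * z ∨ x = y * z) := by
    rw [hCs]
    simp only [Finset.mem_insert, Finset.mem_singleton]
    constructor
    · rintro (h | h | h | h | h | h | h)
      · exact absurd (inv_mul_eq_one.mp h) hxy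
      · exact Or.inl (inv_mul_eq_iff_eq_mul.mp h)
      · exact absurd (by simpa using inv_mul_eq_iff_eq_mul.mp h) hy1
      · exact absurd (right_eq_mul.mp (inv_mul_eq_iff_eq_mul.mp h)) hx1
      · exact Or.inr (Or.inl (eq_mul_inv_iff_mul_eq.mp (inv_mul_eq_iff_eq_mul.mp h)).symm)
      · exact Or.inr (Or.inr (Or.inl (inv_mul_eq_iff_eq_mul.mp h)))
      · exact Or.inr (Or.inr (Or.inr (eq_mul_inv_iff_mul_eq.mp (inv_mul_eq_iff_eq_mul.mp h)).symm))
    · rintro (h | h | h | h)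
      · exact Or.inr (Or.inl (by rw [h]; group))
      · exact Or.inr (Or.inr (Or.inr (Or.inr (Or.inl (by rw [h]; group)))))
      · exact Or.inr (Or.inr (Or.inr (Or.inr (Or.inr (Or.inl (by rw [h]; group))))))
      · exact Or.inr (Or.inr (Or.inr (Or.inr (Or.inr (Or.inr (by rw [h]; group))))))
  have m_u2 : (x⁻¹ * z ∈ Cs) ↔ (z = x * x ∨ x = z * z ∨ x = z * y ∨ z = x * y) := by
    rw [hCs]
    simp only [Finset.mem_insert, Finset.mem_singleton]
    constructor
    · rintro (h | h | h | h | h | h | h)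
      · exact absurd (inv_mul_eq_one.mp h) hxz
      · exact Or.inl (inv_mul_eq_iff_eq_mul.mp h)
      · exact absurd (by simpa using inv_mul_eq_iff_eq_mul.mp h) hz1
      · exact Or.inr (Or.inr (Or.inr (inv_mul_eq_iff_eq_mul.mp h)))
      · exact Or.inr (Or.inr (Or.inl (eq_mul_inv_iff_mul_eq.mp (inv_mul_eq_iff_eq_mul.mp h)).symm))
      · exact absurd (right_eq_mul.mp (inv_mul_eq_iff_eq_mul.mp h)) hx1
      · exact Or.inr (Or.inl (eq_mul_inv_iff_mul_eq.mp (inv_mul_eq_iff_eq_mul.mp h)).symm)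
    · rintro (h | h | h | h)
      · exact Or.inr (Or.inl (by rw [h]; group))
      · exact Or.inr (Or.inr (Or.inr (Or.inr (Or.inr (Or.inr (by rw [h]; group))))))
      · exact Or.inr (Or.inr (Or.inr (Or.inr (Or.inl (by rw [h]; group)))))
      · exact Or.inr (Or.inr (Or.inr (Or.inl (by rw [h]; group))))
  have m_u3 : (y⁻¹ * z ∈ Cs) ↔ (z = y * y ∨ y = z * z ∨ y = z * x ∨ z = y * x) := by
    rw [hCs]
    simp only [Finset.mem_insert, Finset.mem_singleton]
    constructor
    · rintro (h | h | h | h | h | h | h)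
      · exact absurd (inv_mul_eq_one.mp h) hyz
      · exact Or.inr (Or.inr (Or.inr (inv_mul_eq_iff_eq_mul.mp h)))
      · exact Or.inr (Or.inr (Or.inl (eq_mul_inv_iff_mul_eq.mp (inv_mul_eq_iff_eq_mul.mp h)).symm))
      · exact Or.inl (inv_mul_eq_iff_eq_mul.mp h)
      · exact absurd (by simpa using inv_mul_eq_iff_eq_mul.mp h) hz1
      · exact absurd (right_eq_mul.mp (inv_mul_eq_iff_eq_mul.mp h)) hy1
      · exact Or.inr (Or.inl (eq_mul_inv_iff_mul_eq.mp (inv_mul_eq_iff_eq_mul.mp h)).symm)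
    · rintro (h | h | h | h)
      · exact Or.inr (Or.inr (Or.inr (Or.inl (by rw [h]; group))))
      · exact Or.inr (Or.inr (Or.inr (Or.inr (Or.inr (Or.inr (by rw [h]; group))))))
      · exact Or.inr (Or.inr (Or.inl (by rw [h]; group)))
      · exact Or.inr (Or.inl (by rw [h]; group))
  have m_w1 : (y * x⁻¹ ∈ Cs) ↔ (y = x * x ∨ x = y * y ∨ y = z * x ∨ x = z * y) := by
    rw [hCs]
    simp only [Finset.mem_insert, Finset.mem_singleton]
    constructor
    · rintro (h | h | h | h | h | h | h)
      · exact absurd (mul_inv_eq_one.mp h).symm hxy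
      · exact Or.inl (mul_inv_eq_iff_eq_mul.mp h)
      · exact absurd (by simpa using mul_inv_eq_iff_eq_mul.mp h) hy1
      · exact absurd (left_eq_mul.mp (mul_inv_eq_iff_eq_mul.mp h)) hx1
      · exact Or.inr (Or.inl (eq_inv_mul_iff_mul_eq.mp (by rw [← h]; group : y = y⁻¹ * x)).symm)
      · exact Or.inr (Or.inr (Or.inl (mul_inv_eq_iff_eq_mul.mp h)))
      · exact Or.inr (Or.inr (Or.inr (eq_inv_mul_iff_mul_eq.mp
          (by rw [← h]; group : y = z⁻¹ * x)).symm))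
    · rintro (h | h | h | h)
      · exact Or.inr (Or.inl (by rw [h]; group))
      · exact Or.inr (Or.inr (Or.inr (Or.inr (Or.inl (by rw [h]; group)))))
      · exact Or.inr (Or.inr (Or.inr (Or.inr (Or.inr (Or.inl (by rw [h]; group))))))
      · exact Or.inr (Or.inr (Or.inr (Or.inr (Or.inr (Or.inr (by rw [h]; group))))))
  have m_w2 : (z * x⁻¹ ∈ Cs) ↔ (z = x * x ∨ x = z * z ∨ x = y * z ∨ z = y * x) := by
    rw [hCs]
    simp only [Finset.mem_insert, Finset.mem_singleton]
    constructor
    · rintro (h | h | h | h | h | h | h)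
      · exact absurd (mul_inv_eq_one.mp h).symm hxz
      · exact Or.inl (mul_inv_eq_iff_eq_mul.mp h)
      · exact absurd (by simpa using mul_inv_eq_iff_eq_mul.mp h) hz1
      · exact Or.inr (Or.inr (Or.inr (mul_inv_eq_iff_eq_mul.mp h)))
      · exact Or.inr (Or.inr (Or.inl (eq_inv_mul_iff_mul_eq.mp
          (by rw [← h]; group : z = y⁻¹ * x)).symm))
      · exact absurd (left_eq_mul.mp (mul_inv_eq_iff_eq_mul.mp h)) hx1
      · exact Or.inr (Or.inl (eq_inv_mul_iff_mul_eq.mp (by rw [← h]; group : z = z⁻¹ * x)).symm)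
    · rintro (h | h | h | h)
      · exact Or.inr (Or.inl (by rw [h]; group))
      · exact Or.inr (Or.inr (Or.inr (Or.inr (Or.inr (Or.inr (by rw [h]; group))))))
      · exact Or.inr (Or.inr (Or.inr (Or.inr (Or.inl (by rw [h]; group)))))
      · exact Or.inr (Or.inr (Or.inr (Or.inl (by rw [h]; group))))
  have m_w3 : (z * y⁻¹ ∈ Cs) ↔ (z = y * y ∨ y = z * z ∨ y = x * z ∨ z = x * y) := by
    rw [hCs]
    simp only [Finset.mem_insert, Finset.mem_singleton]
    constructor
    · rintro (h | h | h | h | h | h | h)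
      · exact absurd (mul_inv_eq_one.mp h).symm hyz
      · exact Or.inr (Or.inr (Or.inr (mul_inv_eq_iff_eq_mul.mp h)))
      · exact Or.inr (Or.inr (Or.inl (eq_inv_mul_iff_mul_eq.mp
          (by rw [← h]; group : z = x⁻¹ * y)).symm))
      · exact Or.inl (mul_inv_eq_iff_eq_mul.mp h)
      · exact absurd (by simpa using mul_inv_eq_iff_eq_mul.mp h) hz1
      · exact absurd (left_eq_mul.mp (mul_inv_eq_iff_eq_mul.mp h)) hy1
      · exact Or.inr (Or.inl (eq_inv_mul_iff_mul_eq.mp (by rw [← h]; group : z = z⁻¹ * y)).symm)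
    · rintro (h | h | h | h)
      · exact Or.inr (Or.inr (Or.inr (Or.inl (by rw [h]; group))))
      · exact Or.inr (Or.inr (Or.inr (Or.inr (Or.inr (Or.inr (by rw [h]; group))))))
      · exact Or.inr (Or.inr (Or.inl (by rw [h]; group)))
      · exact Or.inr (Or.inl (by rw [h]; group))
  -- pair-equality characterizations
  have q1 : (x⁻¹ * y = x⁻¹ * z) ↔ False :=
    iff_false_intro (fun h => hyz (mul_left_cancel h))
  have q2 : (x⁻¹ * y = (x⁻¹ * z)⁻¹) ↔ (y = x * z⁻¹ * x) := by
    rw [mul_inv_rev, inv_inv, inv_mul_eq_iff_eq_mul, ← mul_assoc]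
  have q3 : (x⁻¹ * y = y⁻¹ * z) ↔ (z = y * x⁻¹ * y) := by
    rw [eq_comm, inv_mul_eq_iff_eq_mul, ← mul_assoc]
  have q4 : (x⁻¹ * y = (y⁻¹ * z)⁻¹) ↔ False := by
    rw [mul_inv_rev, inv_inv]
    exact iff_false_intro (fun h => hxz (inv_injective (mul_right_cancel h)))
  have q5 : (x⁻¹ * z = y⁻¹ * z) ↔ False :=
    iff_false_intro (fun h => hxy (inv_injective (mul_right_cancel h)))
  have q6 : (x⁻¹ * z = (y⁻¹ * z)⁻¹) ↔ (y = z * x⁻¹ * z) := by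
    rw [mul_inv_rev, inv_inv, eq_comm, inv_mul_eq_iff_eq_mul, ← mul_assoc]
  have r1 : (y * x⁻¹ = z * x⁻¹) ↔ False :=
    iff_false_intro (fun h => hyz (mul_right_cancel h))
  have r2 : (y * x⁻¹ = (z * x⁻¹)⁻¹) ↔ (y = x * z⁻¹ * x) := by
    rw [mul_inv_rev, inv_inv, mul_inv_eq_iff_eq_mul]
  have r3 : (y * x⁻¹ = z * y⁻¹) ↔ (z = y * x⁻¹ * y) := by
    rw [eq_comm, mul_inv_eq_iff_eq_mul]
  have r4 : (y * x⁻¹ = (z * y⁻¹)⁻¹) ↔ False := by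
    rw [mul_inv_rev, inv_inv]
    exact iff_false_intro (fun h => hxz (inv_injective (mul_left_cancel h)))
  have r5 : (z * x⁻¹ = z * y⁻¹) ↔ False :=
    iff_false_intro (fun h => hxy (inv_injective (mul_left_cancel h)))
  have r6 : (z * x⁻¹ = (z * y⁻¹)⁻¹) ↔ (y = z * x⁻¹ * z) := by
    rw [mul_inv_rev, inv_inv, eq_comm, mul_inv_eq_iff_eq_mul]
  have F1 : ¬(y = x * x ∧ y = x * z) := fun ⟨h1, h2⟩ => hxz (mul_left_cancel (h1.symm.trans h2))
  have F2 : ¬(y = x * x ∧ y = z * x) := fun ⟨h1, h2⟩ => hxz (mul_right_cancel (h1.symm.trans h2))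
  have F3 : ¬(x = y * y ∧ x = y * z) := fun ⟨h1, h2⟩ => hyz (mul_left_cancel (h1.symm.trans h2))
  have F4 : ¬(x = y * y ∧ x = z * y) := fun ⟨h1, h2⟩ => hyz (mul_right_cancel (h1.symm.trans h2))
  have F5 : ¬(z = x * x ∧ z = x * y) := fun ⟨h1, h2⟩ => hxy (mul_left_cancel (h1.symm.trans h2))
  have F6 : ¬(z = x * x ∧ z = y * x) := fun ⟨h1, h2⟩ => hxy (mul_right_cancel (h1.symm.trans h2))
  have F7 : ¬(x = z * z ∧ x = y * z) := fun ⟨h1, h2⟩ =>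
    hyz (mul_right_cancel (h1.symm.trans h2)).symm
  have F8 : ¬(x = z * z ∧ x = z * y) := fun ⟨h1, h2⟩ =>
    hyz (mul_left_cancel (h1.symm.trans h2)).symm
  have F9 : ¬(z = y * y ∧ z = x * y) := fun ⟨h1, h2⟩ =>
    hxy (mul_right_cancel (h1.symm.trans h2)).symm
  have F10 : ¬(z = y * y ∧ z = y * x) := fun ⟨h1, h2⟩ =>
    hxy (mul_left_cancel (h1.symm.trans h2)).symm
  have F11 : ¬(y = z * z ∧ y = x * z) := fun ⟨h1, h2⟩ =>
    hxz (mul_right_cancel (h1.symm.trans h2)).symm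
  have F12 : ¬(y = z * z ∧ y = z * x) := fun ⟨h1, h2⟩ =>
    hxz (mul_left_cancel (h1.symm.trans h2)).symm
  have F13 : ¬(y = x * z ∧ x = y * z) := by
    rintro ⟨h1, h2⟩
    rw [h1, mul_assoc] at h2
    exact hz1 (hsq z (left_eq_mul.mp h2))
  have F14 : ¬(y = x * z ∧ z = x * y) := by
    rintro ⟨h1, h2⟩
    rw [h2, ← mul_assoc] at h1
    exact hx1 (hsq x (right_eq_mul.mp h1))
  have F15 : ¬(y = x * z ∧ z = y * x⁻¹ * y) := by
    rintro ⟨h1, h2⟩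
    rw [h2] at h1
    rw [show x * (y * x⁻¹ * y) = (x * y * x⁻¹) * y from by group] at h1
    have e := right_eq_mul.mp h1
    exact hy1 (mul_eq_left.mp (mul_inv_eq_one.mp e))
  have F16 : ¬(y = z * x ∧ x = z * y) := by
    rintro ⟨h1, h2⟩
    rw [h2, ← mul_assoc] at h1
    exact hz1 (hsq z (right_eq_mul.mp h1))
  have F17 : ¬(y = z * x ∧ z = y * x) := by
    rintro ⟨h1, h2⟩
    rw [h2, mul_assoc] at h1
    exact hx1 (hsq x (left_eq_mul.mp h1))
  have F18 : ¬(y = z * x ∧ z = y * x⁻¹ * y) := by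
    rintro ⟨h1, h2⟩
    rw [h2] at h1
    rw [show (y * x⁻¹ * y) * x = y * (x⁻¹ * (y * x)) from by group] at h1
    have e := left_eq_mul.mp h1
    exact hy1 (right_eq_mul.mp (inv_mul_eq_one.mp e))
  have F19 : ¬(x = y * z ∧ z = y * x) := by
    rintro ⟨h1, h2⟩
    rw [h2, ← mul_assoc] at h1
    exact hy1 (hsq y (right_eq_mul.mp h1))
  have F20 : ¬(x = y * z ∧ y = x * z⁻¹ * x) := by
    rintro ⟨h1, h2⟩
    rw [h2] at h1
    rw [show (x * z⁻¹ * x) * z = x * (z⁻¹ * (x * z)) from by group] at h1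
    have e := left_eq_mul.mp h1
    exact hx1 (right_eq_mul.mp (inv_mul_eq_one.mp e))
  have F21 : ¬(x = z * y ∧ z = x * y) := by
    rintro ⟨h1, h2⟩
    rw [h2, mul_assoc] at h1
    exact hy1 (hsq y (left_eq_mul.mp h1))
  have F22 : ¬(x = z * y ∧ y = x * z⁻¹ * x) := by
    rintro ⟨h1, h2⟩
    rw [h2] at h1
    rw [show z * (x * z⁻¹ * x) = (z * x * z⁻¹) * x from by group] at h1
    have e := right_eq_mul.mp h1
    exact hx1 (mul_eq_left.mp (mul_inv_eq_one.mp e))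
  have F23 : ¬(z = x * y ∧ y = z * x⁻¹ * z) := by
    rintro ⟨h1, h2⟩
    rw [h1] at h2
    rw [show x * y * x⁻¹ * (x * y) = (x * y) * y from by group] at h2
    exact hz1 (h1.trans (right_eq_mul.mp h2))
  have F24 : ¬(z = y * x ∧ y = z * x⁻¹ * z) := by
    rintro ⟨h1, h2⟩
    rw [h1] at h2
    rw [show y * x * x⁻¹ * (y * x) = y * (y * x) from by group] at h2
    exact hz1 (h1.trans (left_eq_mul.mp h2))
  have F25 : (y = x * x) → (x = y * z) → (x = z * y) := by
    intro h1 h2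
    rw [h1, mul_assoc] at h2
    have hv : z = x⁻¹ := eq_inv_of_mul_eq_one_right (left_eq_mul.mp h2)
    rw [hv, h1]; group
  have F26 : (y = x * x) → (x = z * y) → (x = y * z) := by
    intro h1 h2
    rw [h1, ← mul_assoc] at h2
    have hv : z = x⁻¹ := eq_inv_of_mul_eq_one_left (right_eq_mul.mp h2)
    rw [hv, h1]; group
  have F27 : (x = y * y) → (y = x * z) → (y = z * x) := by
    intro h1 h2
    rw [h1, mul_assoc] at h2
    have hv : z = y⁻¹ := eq_inv_of_mul_eq_one_right (left_eq_mul.mp h2)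
    rw [hv, h1]; group
  have F28 : (x = y * y) → (y = z * x) → (y = x * z) := by
    intro h1 h2
    rw [h1, ← mul_assoc] at h2
    have hv : z = y⁻¹ := eq_inv_of_mul_eq_one_left (right_eq_mul.mp h2)
    rw [hv, h1]; group
  have F29 : (z = x * x) → (x = y * z) → (x = z * y) := by
    intro h1 h2
    rw [h1, ← mul_assoc] at h2
    have hv : y = x⁻¹ := eq_inv_of_mul_eq_one_left (right_eq_mul.mp h2)
    rw [hv, h1]; group
  have F30 : (z = x * x) → (x = z * y) → (x = y * z) := by
    intro h1 h2
    rw [h1, mul_assoc] at h2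
    have hv : y = x⁻¹ := eq_inv_of_mul_eq_one_right (left_eq_mul.mp h2)
    rw [hv, h1]; group
  have F31 : (x = z * z) → (z = x * y) → (z = y * x) := by
    intro h1 h2
    rw [h1, mul_assoc] at h2
    have hv : y = z⁻¹ := eq_inv_of_mul_eq_one_right (left_eq_mul.mp h2)
    rw [hv, h1]; group
  have F32 : (x = z * z) → (z = y * x) → (z = x * y) := by
    intro h1 h2
    rw [h1, ← mul_assoc] at h2
    have hv : y = z⁻¹ := eq_inv_of_mul_eq_one_left (right_eq_mul.mp h2)
    rw [hv, h1]; group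
  have F33 : (z = y * y) → (y = x * z) → (y = z * x) := by
    intro h1 h2
    rw [h1, ← mul_assoc] at h2
    have hv : x = y⁻¹ := eq_inv_of_mul_eq_one_left (right_eq_mul.mp h2)
    rw [hv, h1]; group
  have F34 : (z = y * y) → (y = z * x) → (y = x * z) := by
    intro h1 h2
    rw [h1, mul_assoc] at h2
    have hv : x = y⁻¹ := eq_inv_of_mul_eq_one_right (left_eq_mul.mp h2)
    rw [hv, h1]; group
  have F35 : (y = z * z) → (z = x * y) → (z = y * x) := by
    intro h1 h2
    rw [h1, ← mul_assoc] at h2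
    have hv : x = z⁻¹ := eq_inv_of_mul_eq_one_left (right_eq_mul.mp h2)
    rw [hv, h1]; group
  have F36 : (y = z * z) → (z = y * x) → (z = x * y) := by
    intro h1 h2
    rw [h1, mul_assoc] at h2
    have hv : x = z⁻¹ := eq_inv_of_mul_eq_one_right (left_eq_mul.mp h2)
    rw [hv, h1]; group
  have F37 : (y = x * z) → (y = z * x⁻¹ * z) → (y = z * x) := by
    intro h1 h2
    have e := mul_right_cancel (h1.symm.trans h2)
    have e2 : x * x = z := eq_mul_inv_iff_mul_eq.mp e
    rw [h1, ← e2]; group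
  have F38 : (y = z * x) → (y = z * x⁻¹ * z) → (y = x * z) := by
    intro h1 h2
    have e := h1.symm.trans h2
    rw [mul_assoc] at e
    have e2 : x * x = z := eq_inv_mul_iff_mul_eq.mp (mul_left_cancel e)
    rw [h1, ← e2]; group
  have F39 : (z = x * y) → (y = x * z⁻¹ * x) → (z = y * x) := by
    intro h1 h2
    rw [h1] at h2
    rw [show x * (x * y)⁻¹ * x = x * y⁻¹ from by group] at h2
    have e2 : y * y = x := eq_mul_inv_iff_mul_eq.mp h2
    rw [h1, ← e2]; group
  have F40 : (z = y * x) → (y = x * z⁻¹ * x) → (z = x * y) := by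
    intro h1 h2
    rw [h1] at h2
    rw [show x * (y * x)⁻¹ * x = y⁻¹ * x from by group] at h2
    have e2 : y * y = x := eq_inv_mul_iff_mul_eq.mp h2
    rw [h1, ← e2]; group
  have F41 : (z = x * y) → (z = y * x⁻¹ * y) → (z = y * x) := by
    intro h1 h2
    have e := mul_right_cancel (h1.symm.trans h2)
    have e2 : x * x = y := eq_mul_inv_iff_mul_eq.mp e
    rw [h1, ← e2]; group
  have F42 : (z = y * x) → (z = y * x⁻¹ * y) → (z = x * y) := by
    intro h1 h2
    have e := h1.symm.trans h2
    rw [mul_assoc] at e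
    have e2 : x * x = y := eq_inv_mul_iff_mul_eq.mp (mul_left_cancel e)
    rw [h1, ← e2]; group
  simp only [m_u1, m_u2, m_u3, m_w1, m_w2, m_w3, q1, q2, q3, q4, q5, q6, r1, r2, r3, r4, r5, r6,
    false_or, or_false]
  congr 1
  exact stmt8_core (y = x * x) (x = y * y) (z = x * x) (x = z * z) (z = y * y) (y = z * z)
    (y = x * z) (y = z * x) (x = y * z) (x = z * y) (z = x * y) (z = y * x)
    (y = x * z⁻¹ * x) (z = y * x⁻¹ * y) (y = z * x⁻¹ * z)
    F1 F2 F3 F4 F5 F6 F7 F8 F9 F10 F11 F12 F13 F14 F15 F16 F17 F18 F19 F20 F21 F22 F23 F24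
    F25 F26 F27 F28 F29 F30 F31 F32 F33 F34 F35 F36 F37 F38 F39 F40 F41 F42
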